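/- Let k be an algebraically closed field of characteristic zero. Let K >= 5 be an odd integer, set a = 2K-3, c = 4K^2-16K+11, d = 2K-5, m = ceil(K^2 - (7/2)K + 2), and let Delta_K be the triangle with vertices (0,0), (m-K+2, 0), ((K-1)/2 + 1/c)*(d,a). If f ∈ k[x,y] is a nonzero polynomial supported in Delta_K that vanishes to order at least m at e = (1,1), then (1-y) does not divide f. -/

import Mathlib

open MvPolynomial


namespace Stmt6Aux

def Av (n : ℕ) : ℕ := 4*n+7
def Dv (n : ℕ) : ℕ := 4*n+5
def Mv (n : ℕ) : ℕ := 4*n^2+13*n+10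
def Bv (n : ℕ) : ℕ := 4*n^2+11*n+7
def Hv (n : ℕ) : ℕ := 4*n^2+15*n+14

def colset (n i : ℕ) : Finset ℕ :=
  (Finset.range (Hv n + 1)).filter
    (fun j => Dv n * j ≤ Av n * i ∧ (Av n + 2) * i ≤ (Av n + 2) * Bv n + 2 * j
      ∧ ¬(i = Mv n ∧ j = Hv n))

def S1 (n i : ℕ) : ℕ := (colset n i).card

lemma Dv_pos (n : ℕ) : 0 < Dv n := by simp only [Dv]; omega

lemma mem_colset {n i j : ℕ} :
    j ∈ colset n i ↔ j ≤ Hv n ∧ Dv n * j ≤ Av n * i ∧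
      (Av n + 2) * i ≤ (Av n + 2) * Bv n + 2 * j ∧ ¬(i = Mv n ∧ j = Hv n) := by
  simp [colset, Finset.mem_filter, Finset.mem_range, Nat.lt_succ_iff, and_assoc]

lemma ABdivD (n : ℕ) : Av n * Bv n / Dv n = Bv n + (2*n+2) := by
  have h : Av n * Bv n = Dv n * (Bv n + (2*n+2)) + (4*n+4) := by
    simp only [Av, Bv, Dv]; ring
  rw [h, Nat.mul_add_div (Dv_pos n), Nat.div_eq_of_lt (by simp only [Dv]; omega)]
  omega

lemma raw_bounds {n i j : ℕ} (h1 : Dv n * j ≤ Av n * i)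
    (h2 : (Av n + 2) * i ≤ (Av n + 2) * Bv n + 2 * j) :
    i ≤ Mv n ∧ j ≤ Hv n ∧ (i = Mv n → j = Hv n) := by
  have h3 : Dv n * ((Av n + 2) * i) ≤ Dv n * ((Av n + 2) * Bv n) + 2 * (Av n * i) := by
    calc Dv n * ((Av n + 2) * i) ≤ Dv n * ((Av n + 2) * Bv n + 2 * j) :=
          Nat.mul_le_mul_left _ h2
      _ = Dv n * ((Av n + 2) * Bv n) + 2 * (Dv n * j) := by ring
      _ ≤ Dv n * ((Av n + 2) * Bv n) + 2 * (Av n * i) := by omega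
  have e1 : Dv n * ((Av n + 2) * i) = (16*n^2+48*n+31) * i + 2 * (Av n * i) := by
    simp only [Av, Dv]; ring
  have e2 : Dv n * ((Av n + 2) * Bv n) = (16*n^2+48*n+31) * Mv n + (4*n+5) := by
    simp only [Av, Dv, Bv, Mv]; ring
  have hiM : i ≤ Mv n := by
    by_contra hlt
    push_neg at hlt
    have h5 : (16*n^2+48*n+31) * (Mv n + 1) ≤ (16*n^2+48*n+31) * i :=
      Nat.mul_le_mul_left _ hlt
    have e3 : (16*n^2+48*n+31) * (Mv n + 1) = (16*n^2+48*n+31) * Mv n + (16*n^2+48*n+31) := by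
      ring
    omega
  have hAM : Av n * Mv n = Dv n * Hv n := by simp only [Av, Mv, Dv, Hv]; ring
  have hjH : j ≤ Hv n := by
    have h6 : Dv n * j ≤ Av n * Mv n := le_trans h1 (Nat.mul_le_mul_left _ hiM)
    rw [hAM] at h6
    exact Nat.le_of_mul_le_mul_left h6 (Dv_pos n)
  refine ⟨hiM, hjH, ?_⟩
  rintro rfl
  have eMB : (Av n + 2) * Mv n + 1 = (Av n + 2) * Bv n + 2 * Hv n := by
    simp only [Av, Mv, Bv, Hv]; ring
  omega

lemma col_left {n i : ℕ} (hi : i ≤ Bv n) :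
    colset n i = Finset.Icc 0 (Av n * i / Dv n) := by
  have hD : 0 < Dv n := Dv_pos n
  have hBM : Bv n < Mv n := by simp only [Bv, Mv]; omega
  have hBH : Bv n + (2*n+2) ≤ Hv n := by simp only [Bv, Hv]; omega
  ext j
  rw [mem_colset, Finset.mem_Icc]
  constructor
  · rintro ⟨-, h1, -, -⟩
    refine ⟨Nat.zero_le _, ?_⟩
    rw [Nat.le_div_iff_mul_le hD, mul_comm]
    exact h1
  · rintro ⟨-, hj⟩
    have h1 : Dv n * j ≤ Av n * i :=
      le_trans (Nat.mul_le_mul_left _ hj) (Nat.mul_div_le (Av n * i) (Dv n))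
    have hjB : j ≤ Bv n + (2*n+2) := by
      calc j ≤ Av n * i / Dv n := hj
        _ ≤ Av n * Bv n / Dv n := Nat.div_le_div_right (Nat.mul_le_mul_left _ hi)
        _ = Bv n + (2*n+2) := ABdivD n
    refine ⟨by omega, h1, ?_, by omega⟩
    exact le_trans (Nat.mul_le_mul_left _ hi) (Nat.le_add_right _ _)

lemma col_M (n : ℕ) : colset n (Mv n) = ∅ := by
  rw [Finset.eq_empty_iff_forall_notMem]
  intro j hj
  rw [mem_colset] at hj
  exact hj.2.2.2 ⟨rfl, (raw_bounds hj.2.1 hj.2.2.1).2.2 rfl⟩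

lemma col_right {n u : ℕ} (hu1 : 1 ≤ u) (hu2 : u ≤ 2*n+2) :
    colset n (Mv n - u) = Finset.Icc (Hv n - ((Av n * u + 1)/2 + u)) (Hv n - 1 - u) := by
  have hD : 0 < Dv n := Dv_pos n
  have hMu : u ≤ Mv n := by simp only [Mv]; omega
  set i := Mv n - u with hidef
  have hiu : i + u = Mv n := by omega
  have eA : Av n * i + Av n * u = Av n * Mv n := by rw [← Nat.mul_add, hiu]
  have eA2 : (Av n + 2) * i + (Av n + 2) * u = (Av n + 2) * Mv n := by
    rw [← Nat.mul_add, hiu]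
  have eAM : Av n * Mv n = Dv n * Hv n := by simp only [Av, Mv, Dv, Hv]; ring
  have eMB : (Av n + 2) * Mv n + 1 = (Av n + 2) * Bv n + 2 * Hv n := by
    simp only [Av, Mv, Bv, Hv]; ring
  have eAu : Av n * u = Dv n * u + 2*u := by simp only [Av, Dv]; ring
  have eA2u : (Av n + 2) * u = Av n * u + 2*u := by ring
  obtain ⟨q, r, hqr, hr⟩ : ∃ q r, Av n * u + 1 = 2*q + r ∧ r < 2 :=
    ⟨(Av n * u + 1)/2, (Av n * u + 1) % 2, by omega, Nat.mod_lt _ (by omega)⟩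
  have hq : (Av n * u + 1)/2 = q := by omega
  have hAu_le : Av n * u ≤ Av n * (2*n+2) := Nat.mul_le_mul_left _ hu2
  have h2B : Av n * (2*n+2) + 1 = 2 * Bv n + 1 := by simp only [Av, Bv]; ring
  have hBH : Bv n + (4*n+4) < Hv n := by simp only [Bv, Hv]; omega
  have hDu2 : 2*u < Dv n := by simp only [Dv]; omega
  have hHu : u + 1 ≤ Hv n := by simp only [Hv]; omega
  rw [hq]
  ext j
  rw [mem_colset, Finset.mem_Icc]
  constructor
  · rintro ⟨hjH, h1, h2, -⟩
    constructor
    · -- lower bound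
      omega
    · -- upper bound j ≤ H - 1 - u
      by_contra hcon
      push_neg at hcon
      have hj2 : Hv n - u ≤ j := by omega
      have h7 : Dv n * (Hv n - u) ≤ Dv n * j := Nat.mul_le_mul_left _ hj2
      have e4 : Dv n * (Hv n - u) + Dv n * u = Dv n * Hv n := by
        rw [← Nat.mul_add, Nat.sub_add_cancel (by omega)]
      omega
  · rintro ⟨hlo, hhi⟩
    have hqB : q + u ≤ Bv n + (2*n+2) := by omega
    have hiM : i ≠ Mv n := by omega
    have hjH : j ≤ Hv n := by omega
    refine ⟨hjH, ?_, ?_, by tauto⟩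
    · have h8 : Dv n * j ≤ Dv n * (Hv n - 1 - u) := Nat.mul_le_mul_left _ hhi
      have e5 : Dv n * (Hv n - 1 - u) + Dv n * (u+1) = Dv n * Hv n := by
        rw [← Nat.mul_add]
        congr 1
        omega
      have e6 : Dv n * (u+1) = Dv n * u + Dv n := by ring
      omega
    · omega

lemma S1_left {n i : ℕ} (hi : i ≤ Bv n) : S1 n i = Av n * i / Dv n + 1 := by
  rw [S1, col_left hi, Nat.card_Icc]; simp

lemma S1_right {n u : ℕ} (hu1 : 1 ≤ u) (hu2 : u ≤ 2*n+2) :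
    S1 n (Mv n - u) = (Av n * u + 1)/2 := by
  rw [S1, col_right hu1 hu2, Nat.card_Icc]
  obtain ⟨q, r, hqr, hr⟩ : ∃ q r, Av n * u + 1 = 2*q + r ∧ r < 2 :=
    ⟨(Av n * u + 1)/2, (Av n * u + 1) % 2, by omega, Nat.mod_lt _ (by omega)⟩
  have hq : (Av n * u + 1)/2 = q := by omega
  have hAu_le : Av n * u ≤ Av n * (2*n+2) := Nat.mul_le_mul_left _ hu2
  have h2B : Av n * (2*n+2) + 1 = 2 * Bv n + 1 := by simp only [Av, Bv]; ring
  have hBH : Bv n + (4*n+4) < Hv n := by simp only [Bv, Hv]; omega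
  have hq1 : 1 ≤ q := by
    have h9 : 0 < Av n * u := Nat.mul_pos (by simp only [Av]; omega) hu1
    omega
  omega

lemma S1_M (n : ℕ) : S1 n (Mv n) = 0 := by rw [S1, col_M]; rfl

end Stmt6Aux

namespace Stmt6Aux

lemma S1_left_mono {n i i' : ℕ} (h : i ≤ i') (hi' : i' ≤ Bv n) : S1 n i ≤ S1 n i' := by
  rw [S1_left (le_trans h hi'), S1_left hi']
  have := Nat.div_le_div_right (c := Dv n) (Nat.mul_le_mul_left (Av n) h)
  omega

lemma S1_left_lt {n i i' : ℕ} (h : i < i') (hi' : i' ≤ Bv n) : S1 n i < S1 n i' := by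
  rw [S1_left (le_trans (le_of_lt h) hi'), S1_left hi']
  have h1 : Av n * i + Dv n ≤ Av n * i' := by
    have e : Av n * (i+1) = Av n * i + Dv n + 2 := by simp only [Av, Dv]; ring
    have h2 := Nat.mul_le_mul_left (Av n) (show i+1 ≤ i' by omega)
    omega
  have h2 : (Av n * i + Dv n) / Dv n ≤ Av n * i' / Dv n := Nat.div_le_div_right h1
  rw [Nat.add_div_right _ (Dv_pos n)] at h2
  omega

/-- no left column has the size of a right column. -/
lemma S1_sandwich {n u i : ℕ} (hu1 : 1 ≤ u) (hu2 : u ≤ 2*n+2) (hi : i ≤ Bv n) :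
    S1 n i ≠ (Av n * u + 1)/2 := by
  have hD : 0 < Dv n := Dv_pos n
  obtain ⟨q, r, hqr, hr⟩ : ∃ q r, Dv n * u + 1 = 2*q + r ∧ r < 2 :=
    ⟨(Dv n * u + 1)/2, (Dv n * u + 1) % 2, by omega, Nat.mod_lt _ (by omega)⟩
  have eAu : Av n * u = Dv n * u + 2*u := by simp only [Av, Dv]; ring
  have htgt : (Av n * u + 1)/2 = q + u := by
    have h2 : Av n * u + 1 = 2*(q+u) + r := by omega
    omega
  rw [S1_left hi, htgt]
  intro hEq
  have hmod := Nat.div_add_mod (Av n * i) (Dv n)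
  have hmlt := Nat.mod_lt (Av n * i) hD
  have hq1 : 1 ≤ q := by
    have : 0 < Dv n * u := Nat.mul_pos hD hu1
    omega
  have eDv : Dv n * (Av n * i / Dv n) + Dv n = Dv n * q + Dv n * u := by
    calc Dv n * (Av n * i / Dv n) + Dv n = Dv n * (Av n * i / Dv n + 1) := by ring
      _ = Dv n * (q + u) := by rw [hEq]
      _ = Dv n * q + Dv n * u := by ring
  have eAq : Av n * q = Dv n * q + 2*q := by simp only [Av, Dv]; ring
  have eAD : Av n = Dv n + 2 := by simp [Av, Dv]
  rcases Nat.lt_or_ge i q with hiq | hiq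
  · -- i < q : contradiction
    have h6 : Av n * (i+1) ≤ Av n * q := Nat.mul_le_mul_left _ hiq
    have h7 : Av n * (i+1) = Av n * i + Av n := Nat.mul_succ _ _
    omega
  · -- q ≤ i : contradiction
    have h6 : Av n * q ≤ Av n * i := Nat.mul_le_mul_left _ hiq
    omega

lemma S1_right_lt {n u u' : ℕ} (h : u < u') : (Av n * u + 1)/2 < (Av n * u' + 1)/2 := by
  have h1 : Av n * u + Av n ≤ Av n * u' := by
    have h2 := Nat.mul_le_mul_left (Av n) (show u+1 ≤ u' by omega)
    have e : Av n * (u+1) = Av n * u + Av n := by ring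
    omega
  have hA : 7 ≤ Av n := by simp only [Av]; omega
  obtain ⟨q, r, hqr, hr⟩ : ∃ q r, Av n * u + 1 = 2*q + r ∧ r < 2 :=
    ⟨(Av n * u + 1)/2, (Av n * u + 1) % 2, by omega, Nat.mod_lt _ (by omega)⟩
  have hq : (Av n * u + 1)/2 = q := by omega
  obtain ⟨q', r', hqr', hr'⟩ : ∃ q r, Av n * u' + 1 = 2*q + r ∧ r < 2 :=
    ⟨(Av n * u' + 1)/2, (Av n * u' + 1) % 2, by omega, Nat.mod_lt _ (by omega)⟩
  have hq' : (Av n * u' + 1)/2 = q' := by omega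
  omega

lemma S1_BB (n : ℕ) : S1 n (Bv n) = Mv n := by
  rw [S1_left le_rfl, ABdivD]
  simp only [Bv, Mv]; omega

lemma S1_le_M {n i : ℕ} (hi : i ≤ Mv n) : S1 n i ≤ Mv n := by
  rcases Nat.lt_or_ge (Bv n) i with h | h
  · -- right columns or M itself
    rcases Nat.lt_or_ge i (Mv n) with h2 | h2
    · have hMB : Mv n = Bv n + (2*n+3) := by simp only [Mv, Bv]; ring
      set u := Mv n - i with hu
      have hu1 : 1 ≤ u := by omega
      have hu2 : u ≤ 2*n+2 := by omega
      have hi' : i = Mv n - u := by omega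
      rw [hi', S1_right hu1 hu2]
      have hAu_le : Av n * u ≤ Av n * (2*n+2) := Nat.mul_le_mul_left _ hu2
      have h2B : Av n * (2*n+2) + 1 = 2 * Bv n + 1 := by simp only [Av, Bv]; ring
      have : (Av n * u + 1)/2 ≤ (2 * Bv n + 1)/2 := Nat.div_le_div_right (by omega)
      have e : (2 * Bv n + 1)/2 = Bv n := by omega
      omega
    · have : i = Mv n := by omega
      rw [this, S1_M]
      exact Nat.zero_le _
  · calc S1 n i ≤ S1 n (Bv n) := S1_left_mono h le_rfl
      _ = Mv n := S1_BB n

lemma S1_pos {n i : ℕ} (hi : i < Mv n) : 1 ≤ S1 n i := by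
  rcases Nat.lt_or_ge (Bv n) i with h | h
  · have hMB : Mv n = Bv n + (2*n+3) := by simp only [Mv, Bv]; ring
    set u := Mv n - i with hu
    have hu1 : 1 ≤ u := by omega
    have hu2 : u ≤ 2*n+2 := by omega
    have hi' : i = Mv n - u := by omega
    rw [hi', S1_right hu1 hu2]
    have : 0 < Av n * u := Nat.mul_pos (by simp only [Av]; omega) hu1
    omega
  · rw [S1_left h]
    exact Nat.le_add_left 1 _

lemma S1_inj {n i i' : ℕ} (hi : i < Mv n) (hi' : i' < Mv n) (hne : i ≠ i') :
    S1 n i ≠ S1 n i' := by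
  have hMB : Mv n = Bv n + (2*n+3) := by simp only [Mv, Bv]; ring
  -- wlog-ish by cases
  rcases Nat.lt_or_ge (Bv n) i with h | h <;> rcases Nat.lt_or_ge (Bv n) i' with h' | h'
  · -- both right
    set u := Mv n - i with hu
    set u' := Mv n - i' with hu'
    have e : i = Mv n - u := by omega
    have e' : i' = Mv n - u' := by omega
    rw [e, e', S1_right (by omega) (by omega), S1_right (by omega) (by omega)]
    rcases Nat.lt_or_ge u u' with hc | hc
    · exact Nat.ne_of_lt (S1_right_lt hc)
    · have : u' < u := by omega
      exact (Nat.ne_of_lt (S1_right_lt this)).symm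
  · -- i right, i' left
    set u := Mv n - i with hu
    have e : i = Mv n - u := by omega
    rw [e, S1_right (by omega) (by omega)]
    exact fun hEq => S1_sandwich (n := n) (by omega) (by omega) h' hEq.symm
  · -- i left, i' right
    set u' := Mv n - i' with hu'
    have e' : i' = Mv n - u' := by omega
    rw [e', S1_right (by omega) (by omega)]
    exact S1_sandwich (by omega) (by omega) h
  · -- both left
    rcases Nat.lt_or_ge i i' with hc | hc
    · exact Nat.ne_of_lt (S1_left_lt hc h')
    · have : i' < i := by omega
      exact (Nat.ne_of_lt (S1_left_lt this h)).symm

/-- the number of columns with strictly larger size is at most `M - s`. -/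
lemma card_bigger_cols {n i0 : ℕ} (hi0 : i0 < Mv n) :
    ((Finset.range (Mv n + 1)).filter (fun i' => S1 n i0 < S1 n i')).card
      ≤ Mv n - S1 n i0 := by
  have h1 : ((Finset.range (Mv n + 1)).filter (fun i' => S1 n i0 < S1 n i')).card
      ≤ (Finset.Icc (S1 n i0 + 1) (Mv n)).card := by
    apply Finset.card_le_card_of_injOn (fun i' => S1 n i')
    · intro i' hi'
      rw [Finset.mem_coe, Finset.mem_filter, Finset.mem_range] at hi'
      rw [Finset.mem_coe, Finset.mem_Icc]
      refine ⟨hi'.2, S1_le_M (by omega)⟩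
    · intro x hx y hy hxy
      simp only [Finset.coe_filter, Set.mem_setOf_eq, Finset.mem_range] at hx hy
      by_contra hne
      have hxM : x < Mv n := by
        rcases Nat.lt_or_ge x (Mv n) with h | h
        · exact h
        · exfalso
          have : x = Mv n := by omega
          rw [this, S1_M] at hx
          omega
      have hyM : y < Mv n := by
        rcases Nat.lt_or_ge y (Mv n) with h | h
        · exact h
        · exfalso
          have : y = Mv n := by omega
          rw [this, S1_M] at hy
          omega
      exact S1_inj hxM hyM hne hxy
  rw [Nat.card_Icc] at h1
  omega

end Stmt6Aux



namespace Stmt6Aux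

variable {k : Type*} [CommRing k]

/-- the Euler operator `x_b ∂_b`. -/
noncomputable def Dop (b : Fin 2) (f : MvPolynomial (Fin 2) k) : MvPolynomial (Fin 2) k :=
  X b * pderiv b f

lemma Dop_add (b : Fin 2) (f g : MvPolynomial (Fin 2) k) :
    Dop b (f + g) = Dop b f + Dop b g := by
  simp [Dop, map_add, mul_add]

lemma Dop_mul (b : Fin 2) (f g : MvPolynomial (Fin 2) k) :
    Dop b (f * g) = f * Dop b g + g * Dop b f := by
  simp only [Dop, pderiv_mul]
  ring

lemma Dop_mem {I : Ideal (MvPolynomial (Fin 2) k)} (b : Fin 2) :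
    ∀ s, ∀ f ∈ I ^ (s+1), Dop b f ∈ I ^ s := by
  intro s
  induction s with
  | zero => intro f _; simpa using Submodule.mem_top
  | succ t ih =>
    intro f hf
    rw [pow_succ] at hf
    refine Submodule.mul_induction_on hf (fun a ha c hc => ?_) (fun x y hx hy => ?_)
    · rw [Dop_mul]
      apply Ideal.add_mem
      · exact Ideal.mul_mem_right _ _ ha
      · have h2 := Ideal.mul_mem_mul hc (ih a ha)
        rwa [← pow_succ'] at h2
    · rw [Dop_add]; exact Ideal.add_mem _ hx hy

lemma Dop_iter_mem {I : Ideal (MvPolynomial (Fin 2) k)} (b : Fin 2) :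
    ∀ t s, ∀ f ∈ I ^ (s + t), (Dop b)^[t] f ∈ I ^ s := by
  intro t
  induction t with
  | zero => intro s f hf; simpa using hf
  | succ r ih =>
    intro s f hf
    rw [Function.iterate_succ_apply]
    exact ih s (Dop b f) (Dop_mem b (s+r) f (by rwa [show s+r+1 = s+(r+1) by omega]))

lemma Dop_monomial (b : Fin 2) (e : Fin 2 →₀ ℕ) (c : k) :
    Dop b (monomial e c) = monomial e ((e b : k) * c) := by
  rw [Dop, pderiv_monomial]
  by_cases h : e b = 0
  · rw [h]
    simp
  · have hX : (X b : MvPolynomial (Fin 2) k) = monomial (Finsupp.single b 1) 1 := rfl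
    have hsum : Finsupp.single b 1 + (e - Finsupp.single b 1) = e := by
      ext x
      rcases eq_or_ne b x with rfl | hne
      · simp only [Finsupp.add_apply, Finsupp.tsub_apply, Finsupp.single_eq_same]
        have : 1 ≤ e b := Nat.one_le_iff_ne_zero.mpr h
        omega
      · simp [Finsupp.add_apply, Finsupp.tsub_apply, Finsupp.single_eq_of_ne' hne]
    rw [hX, monomial_mul, hsum]
    congr 1
    ring

lemma Dop_iter_monomial (b : Fin 2) (p : ℕ) (e : Fin 2 →₀ ℕ) (c : k) :
    (Dop b)^[p] (monomial e c) = monomial e ((e b : k)^p * c) := by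
  induction p with
  | zero => simp
  | succ r ih =>
    rw [Function.iterate_succ_apply', ih, Dop_monomial]
    congr 1
    ring

lemma Dop_sum {α : Type*} (b : Fin 2) (s : Finset α)
    (g : α → MvPolynomial (Fin 2) k) :
    Dop b (∑ x ∈ s, g x) = ∑ x ∈ s, Dop b (g x) := by
  classical
  induction s using Finset.induction_on with
  | empty => simp [Dop]
  | insert _ _ hx ihs => rw [Finset.sum_insert hx, Dop_add, ihs, Finset.sum_insert hx]

lemma Dop_iter_sum {α : Type*} (b : Fin 2) (p : ℕ) (s : Finset α)
    (g : α → MvPolynomial (Fin 2) k) :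
    (Dop b)^[p] (∑ x ∈ s, g x) = ∑ x ∈ s, (Dop b)^[p] (g x) := by
  induction p generalizing g with
  | zero => simp
  | succ r ih =>
    rw [Function.iterate_succ_apply, Dop_sum, ih]
    refine Finset.sum_congr rfl (fun x _ => ?_)
    rw [Function.iterate_succ_apply]

lemma eval_one_mem_span (f : MvPolynomial (Fin 2) k)
    (hf : f ∈ Ideal.span ({X 0 - 1, X 1 - 1} : Set (MvPolynomial (Fin 2) k))) :
    eval (fun _ => (1:k)) f = 0 := by
  have hle : Ideal.span ({X 0 - 1, X 1 - 1} : Set (MvPolynomial (Fin 2) k)) ≤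
      RingHom.ker (eval (fun _ => (1:k))) := by
    rw [Ideal.span_le]
    intro g hg
    simp only [Set.mem_insert_iff, Set.mem_singleton_iff] at hg
    rcases hg with rfl | rfl <;> simp [RingHom.mem_ker]
  exact RingHom.mem_ker.mp (hle hf)

/-- the key moment vanishing: if `f` lies in the `m`-th power of the maximal ideal at
`(1,1)`, then all moments of total order `< m` vanish. -/
lemma moment_vanish {m : ℕ} (f : MvPolynomial (Fin 2) k)
    (hf : f ∈ (Ideal.span ({X 0 - 1, X 1 - 1} : Set (MvPolynomial (Fin 2) k))) ^ m)
    {p q : ℕ} (hpq : p + q < m) :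
    ∑ e ∈ f.support, coeff e f * (e 0 : k)^p * (e 1 : k)^q = 0 := by
  set I := Ideal.span ({X 0 - 1, X 1 - 1} : Set (MvPolynomial (Fin 2) k)) with hI
  -- the operator result lies in I^(m-p-q) ⊆ I
  have h1 : (Dop 0)^[p] ((Dop 1)^[q] f) ∈ I ^ (m - p - q) := by
    have h2 : (Dop 1)^[q] f ∈ I ^ (m - q) := by
      apply Dop_iter_mem 1 q (m-q) f
      rwa [show m - q + q = m by omega]
    apply Dop_iter_mem 0 p (m-p-q) _
    rwa [show m - p - q + p = m - q by omega]
  have h3 : (Dop 0)^[p] ((Dop 1)^[q] f) ∈ I := by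
    have hne : m - p - q ≠ 0 := by omega
    exact Ideal.pow_le_self hne h1
  have h4 := eval_one_mem_span _ h3
  -- compute the LHS
  have h5 : (Dop 0)^[p] ((Dop 1)^[q] f) =
      ∑ e ∈ f.support, monomial e ((e 0 : k)^p * ((e 1 : k)^q * coeff e f)) := by
    conv_lhs => rw [f.as_sum]
    rw [Dop_iter_sum, Dop_iter_sum]
    congr 1
    ext e
    rw [Dop_iter_monomial, Dop_iter_monomial]
  rw [h5, map_sum] at h4
  have h6 : ∀ e ∈ f.support,
      eval (fun _ => (1:k)) (monomial e ((e 0 : k)^p * ((e 1 : k)^q * coeff e f)))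
        = coeff e f * (e 0 : k)^p * (e 1 : k)^q := by
    intro e _
    rw [eval_monomial]
    have : (e.prod fun _ e' => (1:k) ^ e') = 1 := by
      simp [Finsupp.prod]
    rw [this]
    ring
  rw [Finset.sum_congr rfl h6] at h4
  exact h4

end Stmt6Aux



namespace Stmt6Aux

variable {k : Type*} [CommRing k]

/-- polynomial functions `ℕ → ℕ → k` of total degree at most `N`. -/
def Vspan (k : Type*) [CommRing k] (N : ℕ) : Submodule k (ℕ → ℕ → k) :=
  Submodule.span k {g | ∃ p q, p + q ≤ N ∧ g = fun (i j : ℕ) => (i:k)^p * (j:k)^q}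

lemma Vspan_mono {N N' : ℕ} (h : N ≤ N') : Vspan k N ≤ Vspan k N' :=
  Submodule.span_mono (fun g hg => by
    obtain ⟨p, q, hpq, rfl⟩ := hg
    exact ⟨p, q, le_trans hpq h, rfl⟩)

lemma Vspan_mul_fst {N : ℕ} (α : k) {g : ℕ → ℕ → k} (hg : g ∈ Vspan k N) :
    (fun (i j : ℕ) => ((i:k) - α) * g i j) ∈ Vspan k (N+1) := by
  induction hg using Submodule.span_induction with
  | mem g hg =>
    obtain ⟨p, q, hpq, rfl⟩ := hg
    have he : (fun (i j : ℕ) => ((i:k) - α) * ((i:k)^p * (j:k)^q)) =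
        (fun (i j : ℕ) => (i:k)^(p+1) * (j:k)^q) - α • (fun (i j : ℕ) => (i:k)^p * (j:k)^q) := by
      funext (i : ℕ) (j : ℕ)
      simp only [Pi.sub_apply, Pi.smul_apply, smul_eq_mul]
      ring
    rw [he]
    refine Submodule.sub_mem _ ?_ (Submodule.smul_mem _ _ ?_)
    · exact Submodule.subset_span ⟨p+1, q, by omega, rfl⟩
    · exact Submodule.subset_span ⟨p, q, by omega, rfl⟩
  | zero =>
    have : (fun (i j : ℕ) => ((i:k) - α) * (0 : ℕ → ℕ → k) i j) = (0 : ℕ → ℕ → k) := by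
      funext (i : ℕ) (j : ℕ); simp
    rw [this]; exact Submodule.zero_mem _
  | add x y hx hy ihx ihy =>
    have : (fun (i j : ℕ) => ((i:k) - α) * (x + y) i j) =
        (fun (i j : ℕ) => ((i:k) - α) * x i j) + (fun (i j : ℕ) => ((i:k) - α) * y i j) := by
      funext (i : ℕ) (j : ℕ); simp [Pi.add_apply]; ring
    rw [this]; exact Submodule.add_mem _ ihx ihy
  | smul c x hx ihx =>
    have : (fun (i j : ℕ) => ((i:k) - α) * (c • x) i j) =
        c • (fun (i j : ℕ) => ((i:k) - α) * x i j) := by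
      funext (i : ℕ) (j : ℕ); simp [Pi.smul_apply, smul_eq_mul]; ring
    rw [this]; exact Submodule.smul_mem _ _ ihx

lemma Vspan_mul_snd {N : ℕ} (α : k) {g : ℕ → ℕ → k} (hg : g ∈ Vspan k N) :
    (fun (i j : ℕ) => ((j:k) - α) * g i j) ∈ Vspan k (N+1) := by
  induction hg using Submodule.span_induction with
  | mem g hg =>
    obtain ⟨p, q, hpq, rfl⟩ := hg
    have he : (fun (i j : ℕ) => ((j:k) - α) * ((i:k)^p * (j:k)^q)) =
        (fun (i j : ℕ) => (i:k)^p * (j:k)^(q+1)) - α • (fun (i j : ℕ) => (i:k)^p * (j:k)^q) := by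
      funext (i : ℕ) (j : ℕ)
      simp only [Pi.sub_apply, Pi.smul_apply, smul_eq_mul]
      ring
    rw [he]
    refine Submodule.sub_mem _ ?_ (Submodule.smul_mem _ _ ?_)
    · exact Submodule.subset_span ⟨p, q+1, by omega, rfl⟩
    · exact Submodule.subset_span ⟨p, q, by omega, rfl⟩
  | zero =>
    have : (fun (i j : ℕ) => ((j:k) - α) * (0 : ℕ → ℕ → k) i j) = (0 : ℕ → ℕ → k) := by
      funext (i : ℕ) (j : ℕ); simp
    rw [this]; exact Submodule.zero_mem _
  | add x y hx hy ihx ihy =>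
    have : (fun (i j : ℕ) => ((j:k) - α) * (x + y) i j) =
        (fun (i j : ℕ) => ((j:k) - α) * x i j) + (fun (i j : ℕ) => ((j:k) - α) * y i j) := by
      funext (i : ℕ) (j : ℕ); simp [Pi.add_apply]; ring
    rw [this]; exact Submodule.add_mem _ ihx ihy
  | smul c x hx ihx =>
    have : (fun (i j : ℕ) => ((j:k) - α) * (c • x) i j) =
        c • (fun (i j : ℕ) => ((j:k) - α) * x i j) := by
      funext (i : ℕ) (j : ℕ); simp [Pi.smul_apply, smul_eq_mul]; ring
    rw [this]; exact Submodule.smul_mem _ _ ihx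

lemma Vspan_one : (fun (_ _ : ℕ) => (1:k)) ∈ Vspan k 0 := by
  have : (fun (_ _ : ℕ) => (1:k)) = fun (i j : ℕ) => (i:k)^0 * (j:k)^0 := by
    funext (i : ℕ) (j : ℕ); simp
  rw [this]
  exact Submodule.subset_span ⟨0, 0, le_rfl, rfl⟩

/-- products of linear factors lie in the span of the right degree. -/
lemma Vspan_prod (C Dst : Finset ℕ) :
    (fun (i j : ℕ) => (∏ c ∈ C, ((i:k) - (c:k))) * (∏ c ∈ Dst, ((j:k) - (c:k))))
      ∈ Vspan k (C.card + Dst.card) := by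
  classical
  induction C using Finset.induction_on with
  | empty =>
    induction Dst using Finset.induction_on with
    | empty => simpa using Vspan_one
    | insert _ _ hd ihd =>
      rename_i c Dst'
      have he : (fun (i j : ℕ) => (∏ c ∈ (∅ : Finset ℕ), ((i:k) - (c:k))) *
          (∏ c' ∈ insert c Dst', ((j:k) - (c':k)))) =
          (fun (i j : ℕ) => ((j:k) - (c:k)) * ((∏ c ∈ (∅ : Finset ℕ), ((i:k) - (c:k))) *
            (∏ c' ∈ Dst', ((j:k) - (c':k))))) := by
        funext (i : ℕ) (j : ℕ)
        rw [Finset.prod_insert hd]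
        ring
      rw [he]
      have := Vspan_mul_snd (c : k) ihd
      rwa [show (∅ : Finset ℕ).card + Dst'.card + 1 =
        (∅ : Finset ℕ).card + (insert c Dst').card by rw [Finset.card_insert_of_notMem hd]; omega] at this
  | insert _ _ hc ihc =>
    rename_i c C'
    have he : (fun (i j : ℕ) => (∏ c' ∈ insert c C', ((i:k) - (c':k))) *
        (∏ c' ∈ Dst, ((j:k) - (c':k)))) =
        (fun (i j : ℕ) => ((i:k) - (c:k)) * ((∏ c' ∈ C', ((i:k) - (c':k))) *
          (∏ c' ∈ Dst, ((j:k) - (c':k))))) := by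
      funext (i : ℕ) (j : ℕ)
      rw [Finset.prod_insert hc]
      ring
    rw [he]
    have := Vspan_mul_fst (c : k) ihc
    rwa [show C'.card + Dst.card + 1 = (insert c C').card + Dst.card by
      rw [Finset.card_insert_of_notMem hc]; omega] at this

/-- pairing the coefficients of `f` against any function in the span vanishes. -/
lemma pairing_vanish {m : ℕ} (f : MvPolynomial (Fin 2) k)
    (hvan : f ∈ (Ideal.span ({X 0 - 1, X 1 - 1} : Set (MvPolynomial (Fin 2) k))) ^ m)
    {N : ℕ} (hN : N < m) {g : ℕ → ℕ → k} (hg : g ∈ Vspan k N) :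
    ∑ e ∈ f.support, coeff e f * g (e 0) (e 1) = 0 := by
  induction hg using Submodule.span_induction with
  | mem g hgen =>
    obtain ⟨p, q, hpq, rfl⟩ := hgen
    have := moment_vanish f hvan (p := p) (q := q) (by omega)
    calc ∑ e ∈ f.support, coeff e f * ((e 0 : k)^p * (e 1 : k)^q)
        = ∑ e ∈ f.support, coeff e f * (e 0 : k)^p * (e 1 : k)^q := by
          refine Finset.sum_congr rfl (fun e _ => by ring)
      _ = 0 := this
  | zero => simp
  | add x y hx hy ihx ihy =>
    have : ∑ e ∈ f.support, coeff e f * (x + y) (e 0) (e 1)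
        = (∑ e ∈ f.support, coeff e f * x (e 0) (e 1))
          + ∑ e ∈ f.support, coeff e f * y (e 0) (e 1) := by
      rw [← Finset.sum_add_distrib]
      refine Finset.sum_congr rfl (fun e _ => ?_)
      simp [Pi.add_apply]; ring
    rw [this, ihx, ihy, add_zero]
  | smul c x hx ihx =>
    have : ∑ e ∈ f.support, coeff e f * (c • x) (e 0) (e 1)
        = c * ∑ e ∈ f.support, coeff e f * x (e 0) (e 1) := by
      rw [Finset.mul_sum]
      refine Finset.sum_congr rfl (fun e _ => ?_)
      simp [Pi.smul_apply, smul_eq_mul]; ring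
    rw [this, ihx, mul_zero]

end Stmt6Aux

open Stmt6Aux

set_option maxHeartbeats 2000000 in
theorem stmt6 (k : Type*) [Field k] [IsAlgClosed k] [CharZero k]
    (K : ℤ) (hK : 5 ≤ K) (hKodd : Odd K)
    (a c d : ℤ) (m : ℕ) (ha : a = 2 * K - 3) (hc : c = 4 * K ^ 2 - 16 * K + 11)
    (hd : d = 2 * K - 5)
    (hm : 2 * (m : ℤ) = 2 * K ^ 2 - 7 * K + 5)
    (f : MvPolynomial (Fin 2) k) (hf0 : f ≠ 0)
    (hsupp : ∀ e ∈ f.support,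
      ((e 0 : ℝ), (e 1 : ℝ)) ∈ convexHull ℝ
        ({((0 : ℝ), (0 : ℝ)), ((m : ℝ) - (K : ℝ) + 2, 0),
          (((K : ℝ) - 1) / 2 + 1 / (c : ℝ)) • ((d : ℝ), (a : ℝ))} : Set (ℝ × ℝ)))
    (hvan : f ∈ (Ideal.span {X 0 - 1, X 1 - 1} : Ideal (MvPolynomial (Fin 2) k)) ^ m) :
    ¬ ((1 - X 1 : MvPolynomial (Fin 2) k) ∣ f) := by
  intro hdiv
  classical
  -- extract the natural parameter n with K = 2n+5
  obtain ⟨l, hl⟩ := hKodd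
  obtain ⟨n, hn⟩ := Int.eq_ofNat_of_zero_le (show (0:ℤ) ≤ (K - 5)/2 by omega)
  have hKn : K = 2*(n:ℤ) + 5 := by omega
  -- cast identities
  have haZ : ((Av n : ℕ) : ℤ) = a := by simp only [Av]; push_cast; omega
  have hdZ : ((Dv n : ℕ) : ℤ) = d := by simp only [Dv]; push_cast; omega
  have hm2 : 2*(m:ℤ) = 8*(n:ℤ)^2 + 26*(n:ℤ) + 20 := by rw [hm, hKn]; ring
  have hMZ : ((Mv n : ℕ) : ℤ) = (m:ℤ) := by
    simp only [Mv]; push_cast; omega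
  have hBZ : ((Bv n : ℕ) : ℤ) = (m:ℤ) - K + 2 := by
    simp only [Bv]; push_cast; omega
  have hm_eq : m = Mv n := by exact_mod_cast hMZ.symm
  -- ℝ versions
  have haR : ((Av n : ℕ) : ℝ) = (a:ℝ) := by exact_mod_cast congrArg (Int.cast : ℤ → ℝ) haZ
  have hdR : ((Dv n : ℕ) : ℝ) = (d:ℝ) := by exact_mod_cast congrArg (Int.cast : ℤ → ℝ) hdZ
  have hBR : ((Bv n : ℕ) : ℝ) = (m:ℝ) - (K:ℝ) + 2 := by
    have := congrArg (Int.cast : ℤ → ℝ) hBZ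
    push_cast at this ⊢
    linarith
  have hKR : (5:ℝ) ≤ (K:ℝ) := by exact_mod_cast hK
  have hmR : 2 * (m:ℝ) = 2*(K:ℝ)^2 - 7*(K:ℝ) + 5 := by exact_mod_cast hm
  have hcR : (c:ℝ) = 4*(K:ℝ)^2 - 16*(K:ℝ) + 11 := by exact_mod_cast hc
  have haR' : (a:ℝ) = 2*(K:ℝ) - 3 := by exact_mod_cast ha
  have hdR' : (d:ℝ) = 2*(K:ℝ) - 5 := by exact_mod_cast hd
  have hcpos : (0:ℝ) < (c:ℝ) := by rw [hcR]; nlinarith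
  -- support inequalities, in ℕ
  have hineq : ∀ e ∈ f.support,
      Dv n * (e 1) ≤ Av n * (e 0) ∧
      (Av n + 2) * (e 0) ≤ (Av n + 2) * (Bv n) + 2 * (e 1) := by
    intro e he
    have hmem := hsupp e he
    constructor
    · -- halfplane 1 : d * y - a * x ≤ 0
      have hlin : IsLinearMap ℝ (fun x : ℝ × ℝ => (d:ℝ) * x.2 - (a:ℝ) * x.1) := by
        constructor
        · intro p q; simp only [Prod.fst_add, Prod.snd_add]; ring
        · intro r p; simp only [Prod.smul_fst, Prod.smul_snd, smul_eq_mul]; ring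
      have hconv : Convex ℝ {x : ℝ × ℝ | (d:ℝ) * x.2 - (a:ℝ) * x.1 ≤ 0} :=
        convex_halfSpace_le hlin 0
      have hsub : ({((0 : ℝ), (0 : ℝ)), ((m : ℝ) - (K : ℝ) + 2, 0),
          (((K : ℝ) - 1) / 2 + 1 / (c : ℝ)) • ((d : ℝ), (a : ℝ))} : Set (ℝ × ℝ)) ⊆
          {x : ℝ × ℝ | (d:ℝ) * x.2 - (a:ℝ) * x.1 ≤ 0} := by
        rintro x (rfl | rfl | rfl)
        · simp
        · have hBnn : (0:ℝ) ≤ (m:ℝ) - (K:ℝ) + 2 := by nlinarith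
          have hann : (0:ℝ) ≤ (a:ℝ) := by rw [haR']; linarith
          have : (0:ℝ) ≤ (a:ℝ) * ((m:ℝ) - (K:ℝ) + 2) := mul_nonneg hann hBnn
          simp only [Set.mem_setOf_eq]
          linarith
        · rw [Prod.smul_mk]
          simp only [Set.mem_setOf_eq, smul_eq_mul]
          exact le_of_eq (by ring)
      have := (convexHull_min hsub hconv) hmem
      simp only [Set.mem_setOf_eq] at this
      have hZ : (Dv n : ℤ) * (e 1 : ℤ) ≤ (Av n : ℤ) * (e 0 : ℤ) := by
        have : ((Dv n : ℕ):ℝ) * (e 1 : ℝ) ≤ ((Av n : ℕ):ℝ) * (e 0 : ℝ) := by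
          rw [haR, hdR]; linarith
        exact_mod_cast this
      exact_mod_cast hZ
    · -- halfplane 2 : (a+2) * x - 2 * y ≤ (a+2) * B
      have hlin : IsLinearMap ℝ (fun x : ℝ × ℝ => ((a:ℝ)+2) * x.1 - 2 * x.2) := by
        constructor
        · intro p q; simp only [Prod.fst_add, Prod.snd_add]; ring
        · intro r p; simp only [Prod.smul_fst, Prod.smul_snd, smul_eq_mul]; ring
      have hconv : Convex ℝ
          {x : ℝ × ℝ | ((a:ℝ)+2) * x.1 - 2 * x.2 ≤ ((a:ℝ)+2) * ((m:ℝ) - (K:ℝ) + 2)} :=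
        convex_halfSpace_le hlin _
      have hsub : ({((0 : ℝ), (0 : ℝ)), ((m : ℝ) - (K : ℝ) + 2, 0),
          (((K : ℝ) - 1) / 2 + 1 / (c : ℝ)) • ((d : ℝ), (a : ℝ))} : Set (ℝ × ℝ)) ⊆
          {x : ℝ × ℝ | ((a:ℝ)+2) * x.1 - 2 * x.2 ≤ ((a:ℝ)+2) * ((m:ℝ) - (K:ℝ) + 2)} := by
        rintro x (rfl | rfl | rfl)
        · have hBnn : (0:ℝ) ≤ (m:ℝ) - (K:ℝ) + 2 := by nlinarith
          have hann : (0:ℝ) ≤ (a:ℝ) := by rw [haR']; linarith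
          have : (0:ℝ) ≤ ((a:ℝ)+2) * ((m:ℝ) - (K:ℝ) + 2) :=
            mul_nonneg (by linarith) hBnn
          simp only [Set.mem_setOf_eq]
          linarith
        · simp only [Set.mem_setOf_eq]
          exact le_of_eq (by ring)
        · rw [Prod.smul_mk]
          simp only [Set.mem_setOf_eq, smul_eq_mul]
          apply le_of_eq
          have hcne : (c:ℝ) ≠ 0 := ne_of_gt hcpos
          have hsc : (((K:ℝ)-1)/2 + 1/(c:ℝ)) * (c:ℝ) = ((K:ℝ)-1)/2*(c:ℝ) + 1 := by
            field_simp
          have expand : ((a:ℝ)+2)*((((K:ℝ)-1)/2 + 1/(c:ℝ))*(d:ℝ))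
              - 2*((((K:ℝ)-1)/2 + 1/(c:ℝ))*(a:ℝ))
              = (((K:ℝ)-1)/2 + 1/(c:ℝ)) * (c:ℝ) := by
            rw [haR', hdR', hcR]; ring
          rw [expand, hsc, hcR, haR']
          linear_combination (-(2*(K:ℝ)-1)/2) * hmR
      have := (convexHull_min hsub hconv) hmem
      simp only [Set.mem_setOf_eq] at this
      have hZ : ((Av n : ℤ) + 2) * (e 0 : ℤ) ≤ ((Av n : ℤ) + 2) * (Bv n : ℤ) + 2 * (e 1 : ℤ) := by
        have h2 : (((Av n : ℕ):ℝ) + 2) * (e 0 : ℝ) ≤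
            (((Av n : ℕ):ℝ) + 2) * ((Bv n : ℕ):ℝ) + 2 * (e 1 : ℝ) := by
          rw [haR, hBR]; linarith
        exact_mod_cast h2
      exact_mod_cast hZ
  -- the special point P*
  set Pstar : Fin 2 →₀ ℕ := Finsupp.single 0 (Mv n) + Finsupp.single 1 (Hv n) with hPstar
  have hP0 : Pstar 0 = Mv n := by simp [hPstar, Finsupp.single_apply]
  have hP1 : Pstar 1 = Hv n := by simp [hPstar, Finsupp.single_apply]
  -- coefficient of P* vanishes because (1 - y) ∣ f
  have hPcoeff : coeff Pstar f = 0 := by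
    obtain ⟨g, hg⟩ := hdiv
    -- evaluate y := 1
    set φ : MvPolynomial (Fin 2) k →ₐ[k] Polynomial k :=
      aeval (fun b : Fin 2 => if b = 0 then (Polynomial.X : Polynomial k) else 1) with hφ
    have hφf : φ f = 0 := by
      rw [hg, map_mul]
      have : φ (1 - X 1) = 0 := by
        simp [hφ, map_sub]
      rw [this, zero_mul]
    have hsum : φ f = ∑ e ∈ f.support, Polynomial.C (coeff e f) * Polynomial.X ^ (e 0) := by
      conv_lhs => rw [f.as_sum]
      rw [map_sum]
      refine Finset.sum_congr rfl (fun e _ => ?_)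
      rw [aeval_monomial]
      have hprod : (e.prod fun i k' => (if i = 0 then (Polynomial.X : Polynomial k) else 1) ^ k')
          = Polynomial.X ^ (e 0) := by
        rw [Finsupp.prod_fintype _ _ (fun i => pow_zero _)]
        rw [Fin.prod_univ_two]
        norm_num
      rw [hprod]
      rfl
    have hcoeffM : (φ f).coeff (Mv n) = 0 := by rw [hφf]; simp
    rw [hsum] at hcoeffM
    rw [Polynomial.finset_sum_coeff] at hcoeffM
    have hterm : ∀ e ∈ f.support,
        (Polynomial.C (coeff e f) * Polynomial.X ^ (e 0)).coeff (Mv n)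
          = coeff e f * (if Mv n = e 0 then 1 else 0) := by
      intro e _
      rw [Polynomial.coeff_C_mul, Polynomial.coeff_X_pow]
    rw [Finset.sum_congr rfl hterm] at hcoeffM
    by_cases hPmem : Pstar ∈ f.support
    · have hothers : ∀ e ∈ f.support, e ≠ Pstar →
          coeff e f * (if Mv n = e 0 then 1 else 0) = 0 := by
        intro e he hne
        have hie := hineq e he
        obtain ⟨hiM, hjH, hcolM⟩ := raw_bounds hie.1 hie.2
        by_cases h0 : Mv n = e 0
        · exfalso
          apply hne
          have h1 : e 1 = Hv n := hcolM h0.symm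
          ext x
          fin_cases x
          · simp [hPstar, Finsupp.single_apply, ← h0]
          · simp [hPstar, Finsupp.single_apply, h1]
        · rw [if_neg h0, mul_zero]
      have hsum2 := Finset.sum_eq_single_of_mem Pstar hPmem hothers
      rw [hsum2, hP0, if_pos rfl, mul_one] at hcoeffM
      exact hcoeffM
    · exact MvPolynomial.notMem_support_iff.1 hPmem
  have hPnot : Pstar ∉ f.support := fun h => (MvPolynomial.mem_support_iff.1 h) hPcoeff
  -- every support point lies in a column < M with its j in the column set
  have hcol : ∀ e ∈ f.support, (e 0) < Mv n ∧ (e 1) ∈ colset n (e 0) := by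
    intro e he
    have hie := hineq e he
    obtain ⟨hiM, hjH, hcolM⟩ := raw_bounds hie.1 hie.2
    have hne : e 0 ≠ Mv n := by
      intro h0
      apply hPnot
      have h1 : e 1 = Hv n := hcolM h0
      have : e = Pstar := by
        ext x
        fin_cases x
        · simp [hPstar, Finsupp.single_apply, h0]
        · simp [hPstar, Finsupp.single_apply, h1]
      rwa [← this]
    refine ⟨lt_of_le_of_ne hiM hne, ?_⟩
    rw [mem_colset]
    exact ⟨hjH, hie.1, hie.2, fun hc => hne hc.1⟩
  -- pick the maximal support point in the elimination order
  have hne : f.support.Nonempty := MvPolynomial.support_nonempty.2 hf0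
  obtain ⟨P, hPmem, hPmax⟩ := Finset.exists_max_image f.support
    (fun e => toLex (Mv n - S1 n (e 0), e 1)) hne
  obtain ⟨hP0M, hPcol⟩ := hcol P hPmem
  set i0 := P 0 with hi0
  set j0 := P 1 with hj0
  have hs1 : 1 ≤ S1 n i0 := S1_pos hP0M
  have hsM : S1 n i0 ≤ Mv n := S1_le_M (le_of_lt hP0M)
  set Cset := (Finset.range (Mv n + 1)).filter (fun i' => S1 n i0 < S1 n i') with hCset
  set Dset := (colset n i0).filter (fun j' => j' < j0) with hDset
  have hCcard : Cset.card ≤ Mv n - S1 n i0 := card_bigger_cols hP0M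
  have hDcard : Dset.card ≤ S1 n i0 - 1 := by
    have hsubset : Dset ⊆ (colset n i0).erase j0 := by
      intro x hx
      rw [hDset, Finset.mem_filter] at hx
      exact Finset.mem_erase.2 ⟨Nat.ne_of_lt hx.2, hx.1⟩
    calc Dset.card ≤ ((colset n i0).erase j0).card := Finset.card_le_card hsubset
      _ = (colset n i0).card - 1 := Finset.card_erase_of_mem hPcol
      _ = S1 n i0 - 1 := rfl
  -- the test function
  set g : ℕ → ℕ → k := fun (i j : ℕ) =>
    (∏ c' ∈ Cset, ((i:k) - (c':k))) * (∏ c' ∈ Dset, ((j:k) - (c':k))) with hgdef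
  have hzero : ∑ e ∈ f.support, coeff e f * g (e 0) (e 1) = 0 := by
    apply pairing_vanish f hvan (N := Cset.card + Dset.card)
    · rw [hm_eq]; omega
    · exact Vspan_prod Cset Dset
  have hsingle : ∑ e ∈ f.support, coeff e f * g (e 0) (e 1)
      = coeff P f * g i0 j0 := by
    apply Finset.sum_eq_single_of_mem P hPmem
    intro e he hneP
    have hge : g (e 0) (e 1) = 0 := by
      obtain ⟨he0M, hecol⟩ := hcol e he
      by_cases hcase : e 0 = i0
      · -- same column
        have hj_ne : e 1 ≠ j0 := by
          intro hj
          apply hneP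
          ext x
          fin_cases x
          · exact hcase
          · exact hj
        have hkey := hPmax e he
        rw [Prod.Lex.toLex_le_toLex] at hkey
        have hjlt : e 1 < j0 := by
          rcases hkey with h | h
          · exfalso; rw [hcase] at h; omega
          · have := h.2
            simp only at this
            omega
        have hmem : e 1 ∈ Dset := by
          rw [hDset, Finset.mem_filter]
          rw [hcase] at hecol
          exact ⟨hecol, hjlt⟩
        rw [hgdef]
        apply mul_eq_zero_of_right
        exact Finset.prod_eq_zero hmem (sub_self _)
      · -- different column
        have hS1ne : S1 n (e 0) ≠ S1 n i0 := S1_inj he0M hP0M hcase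
        rcases Nat.lt_or_ge (S1 n i0) (S1 n (e 0)) with hlt | hge'
        · have hmem : e 0 ∈ Cset := by
            rw [hCset, Finset.mem_filter, Finset.mem_range]
            exact ⟨by omega, hlt⟩
          rw [hgdef]
          apply mul_eq_zero_of_left
          exact Finset.prod_eq_zero hmem (sub_self _)
        · exfalso
          have hlt2 : S1 n (e 0) < S1 n i0 := by omega
          have hkey := hPmax e he
          rw [Prod.Lex.toLex_le_toLex] at hkey
          rcases hkey with h | h
          · simp only at h; omega
          · have := h.1
            simp only at this
            omega
    rw [hge, mul_zero]
  have hgne : g i0 j0 ≠ 0 := by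
    rw [hgdef]
    apply mul_ne_zero
    · rw [Finset.prod_ne_zero_iff]
      intro c' hc'
      rw [hCset, Finset.mem_filter] at hc'
      have hcne : c' ≠ i0 := by
        intro hcc
        rw [hcc] at hc'
        omega
      intro hzero'
      have h2 : ((i0:ℕ):k) = ((c':ℕ):k) := sub_eq_zero.1 hzero'
      exact hcne (Nat.cast_inj.mp h2).symm
    · rw [Finset.prod_ne_zero_iff]
      intro c' hc'
      rw [hDset, Finset.mem_filter] at hc'
      have hcne : c' ≠ j0 := Nat.ne_of_lt hc'.2
      intro hzero'
      have h2 : ((j0:ℕ):k) = ((c':ℕ):k) := sub_eq_zero.1 hzero'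
      exact hcne (Nat.cast_inj.mp h2).symm
  rw [hsingle] at hzero
  have : coeff P f = 0 := by
    rcases mul_eq_zero.1 hzero with h | h
    · exact h
    · exact absurd h hgne
  exact (MvPolynomial.mem_support_iff.1 hPmem) this
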